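/- Let A be an N×N real matrix with nonnegative off-diagonal entries, zero column sums, and irreducible (i.e., for every pair of indices i ≠ j there is a finite sequence i = i₀, i₁, …, i_m = j with A_{i_{l+1} i_l} ≠ 0 for all l). Then the kernel of A is one-dimensional and is spanned by a vector w all of whose entries are strictly positive. -/

import Mathlib

open Finset

/-- `A` is irreducible: for every pair of indices `i ≠ j` there is a finite sequence
`i = i₀, i₁, …, i_m = j` with `A (i_{l+1}) (i_l) ≠ 0` for all `l`. -/
def MatrixIrreducible {N : ℕ} (A : Matrix (Fin N) (Fin N) ℝ) : Prop :=
  ∀ i j : Fin N, i ≠ j → ∃ (m : ℕ) (c : ℕ → Fin N),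
    c 0 = i ∧ c m = j ∧ ∀ l < m, A (c (l + 1)) (c l) ≠ 0


/-- Entries of powers of an entrywise-nonnegative matrix are nonnegative. -/
lemma pow_entry_nonneg {N : ℕ} (P : Matrix (Fin N) (Fin N) ℝ)
    (hP : ∀ i j, 0 ≤ P i j) : ∀ (m : ℕ) (i j : Fin N), 0 ≤ (P ^ m) i j := by
  intro m
  induction m with
  | zero => intro i j; simp [Matrix.one_apply]; positivity
  | succ m ih =>
      intro i j
      rw [pow_succ, Matrix.mul_apply]
      exact Finset.sum_nonneg fun k _ => mul_nonneg (ih i k) (hP k j)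

/-- Entry of a power along a "positive path". -/
lemma pow_entry_path_pos {N : ℕ} (P : Matrix (Fin N) (Fin N) ℝ)
    (hP : ∀ i j, 0 ≤ P i j) :
    ∀ (m : ℕ) (c : ℕ → Fin N), (∀ l < m, 0 < P (c (l + 1)) (c l)) →
      0 < (P ^ m) (c m) (c 0) := by
  intro m
  induction m with
  | zero => intro c _; simp [Matrix.one_apply]
  | succ m ih =>
      intro c hc
      rw [pow_succ', Matrix.mul_apply]
      apply Finset.sum_pos'
      · intro k _
        exact mul_nonneg (hP _ _) (pow_entry_nonneg P hP m k (c 0))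
      · refine ⟨c m, Finset.mem_univ _, ?_⟩
        exact mul_pos (hc m (Nat.lt_succ_self m))
          (ih c fun l hl => hc l (hl.trans (Nat.lt_succ_self m)))

/-- Column sums of powers of a column-stochastic matrix are one. -/
lemma pow_colsum {N : ℕ} (P : Matrix (Fin N) (Fin N) ℝ)
    (hcol : ∀ j, ∑ i, P i j = 1) : ∀ (m : ℕ) (j : Fin N), ∑ i, (P ^ m) i j = 1 := by
  intro m
  induction m with
  | zero => intro j; simp [Matrix.one_apply]
  | succ m ih =>
      intro j
      simp only [pow_succ, Matrix.mul_apply]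
      rw [Finset.sum_comm]
      calc ∑ k, ∑ i, (P ^ m) i k * P k j
          = ∑ k, (∑ i, (P ^ m) i k) * P k j := by
            simp [Finset.sum_mul]
        _ = ∑ k, P k j := by simp [ih]
        _ = 1 := hcol j

lemma pow_mulVec_fixed {N : ℕ} (P : Matrix (Fin N) (Fin N) ℝ) (u : Fin N → ℝ)
    (hu : P.mulVec u = u) (m : ℕ) : (P ^ m).mulVec u = u := by
  induction m with
  | zero => simp
  | succ m ih => rw [pow_succ', ← Matrix.mulVec_mulVec, ih, hu]

/-- Sign dichotomy for fixed vectors of an entrywise positive column-stochastic matrix. -/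
lemma sign_dichotomy {N : ℕ} (hN : 0 < N) (Q : Matrix (Fin N) (Fin N) ℝ)
    (hpos : ∀ i j, 0 < Q i j) (hcol : ∀ j, ∑ i, Q i j = 1)
    (u : Fin N → ℝ) (hu : Q.mulVec u = u) :
    (∀ j, 0 ≤ u j) ∨ (∀ j, u j ≤ 0) := by
  by_contra h
  push_neg at h
  obtain ⟨⟨j, hj⟩, ⟨k, hk⟩⟩ := h
  have hui : ∀ i, u i = ∑ l, Q i l * u l := by
    intro i
    conv_lhs => rw [← hu]
    simp [Matrix.mulVec, dotProduct]
  have hstrict : ∀ i, |u i| < ∑ l, Q i l * |u l| := by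
    intro i
    rw [hui i]
    rcases le_or_gt 0 (∑ l, Q i l * u l) with hs | hs
    · rw [abs_of_nonneg hs]
      refine Finset.sum_lt_sum (fun l _ => ?_) ⟨j, Finset.mem_univ _, ?_⟩
      · exact mul_le_mul_of_nonneg_left (le_abs_self _) (hpos i l).le
      · exact mul_lt_mul_of_pos_left (hj.trans_le (abs_nonneg _)) (hpos i j)
    · rw [abs_of_neg hs, ← Finset.sum_neg_distrib]
      refine Finset.sum_lt_sum (fun l _ => ?_) ⟨k, Finset.mem_univ _, ?_⟩
      · rw [← mul_neg]
        exact mul_le_mul_of_nonneg_left (neg_le_abs _) (hpos i l).le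
      · rw [← mul_neg]
        refine mul_lt_mul_of_pos_left ?_ (hpos i k)
        have : -u k < 0 := neg_neg_of_pos hk
        exact this.trans_le (abs_nonneg _)
  have hlt : ∑ i, |u i| < ∑ i, |u i| := by
    calc ∑ i, |u i| < ∑ i, ∑ l, Q i l * |u l| := by
          refine Finset.sum_lt_sum (fun i _ => (hstrict i).le)
            ⟨⟨0, hN⟩, Finset.mem_univ _, hstrict _⟩
      _ = ∑ l, (∑ i, Q i l) * |u l| := by
          rw [Finset.sum_comm]; simp [Finset.sum_mul]
      _ = ∑ l, |u l| := by simp [hcol]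
  exact lt_irrefl _ hlt

lemma all_pos {N : ℕ} (Q : Matrix (Fin N) (Fin N) ℝ)
    (hpos : ∀ i j, 0 < Q i j) (u : Fin N → ℝ) (hu : Q.mulVec u = u)
    (hnn : ∀ j, 0 ≤ u j) (hne : u ≠ 0) : ∀ i, 0 < u i := by
  obtain ⟨k, hk⟩ : ∃ k, 0 < u k := by
    by_contra h
    push_neg at h
    exact hne (funext fun i => le_antisymm (h i) (hnn i))
  intro i
  have : u i = ∑ l, Q i l * u l := by
    conv_lhs => rw [← hu]
    simp [Matrix.mulVec, dotProduct]
  rw [this]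
  exact Finset.sum_pos' (fun l _ => mul_nonneg (hpos i l).le (hnn l))
    ⟨k, Finset.mem_univ _, mul_pos (hpos i k) hk⟩

/-- For an irreducible `N × N` real matrix `A` with nonnegative off-diagonal entries
and zero column sums, the kernel of `A` is one-dimensional and spanned by a vector
with strictly positive entries. -/
theorem osmosis_kernel_positive (N : ℕ) (A : Matrix (Fin N) (Fin N) ℝ)
    (hoff : ∀ i j, i ≠ j → 0 ≤ A i j) (hsum : ∀ j, ∑ i, A i j = 0)
    (hirr : MatrixIrreducible A) :
    ∃ w : Fin N → ℝ, (∀ i, 0 < w i) ∧ A.mulVec w = 0 ∧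
      ∀ u : Fin N → ℝ, A.mulVec u = 0 → ∃ c : ℝ, u = c • w := by
  rcases Nat.eq_zero_or_pos N with rfl | hN
  · exact ⟨fun _ => 1, fun i => i.elim0, funext fun i => i.elim0,
      fun u _ => ⟨0, funext fun i => i.elim0⟩⟩
  -- the shifted, rescaled matrix P
  set s : ℝ := 1 + ∑ i, |A i i| with hs_def
  have hs : 0 < s := by positivity
  have hsd : ∀ j, 0 < A j j + s := by
    intro j
    have h1 : |A j j| ≤ ∑ i, |A i i| :=
      Finset.single_le_sum (f := fun i => |A i i|) (fun i _ => abs_nonneg _)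
        (Finset.mem_univ j)
    have h2 : -|A j j| ≤ A j j := neg_abs_le _
    simp only [hs_def]; linarith
  set P : Matrix (Fin N) (Fin N) ℝ :=
    Matrix.of fun i j => (A i j + if i = j then s else 0) / s with hP_def
  have hPdiag : ∀ i, 0 < P i i := by
    intro i
    simp only [hP_def, Matrix.of_apply, if_pos rfl]
    exact div_pos (hsd i) hs
  have hPnn : ∀ i j, 0 ≤ P i j := by
    intro i j
    rcases eq_or_ne i j with rfl | hij
    · exact (hPdiag i).le
    · simp only [hP_def, Matrix.of_apply, if_neg hij, add_zero]
      exact div_nonneg (hoff i j hij) hs.le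
  have hPstep : ∀ a b, A a b ≠ 0 → 0 < P a b := by
    intro a b hab
    rcases eq_or_ne a b with rfl | hne
    · exact hPdiag a
    · simp only [hP_def, Matrix.of_apply, if_neg hne, add_zero]
      exact div_pos (lt_of_le_of_ne (hoff a b hne) (Ne.symm hab)) hs
  have hPcol : ∀ j, ∑ i, P i j = 1 := by
    intro j
    simp only [hP_def, Matrix.of_apply]
    rw [← Finset.sum_div, Finset.sum_add_distrib, hsum j]
    simp [div_self hs.ne']
  have hfix : ∀ v, A.mulVec v = 0 → P.mulVec v = v := by
    intro v hv
    funext i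
    have hAv : ∑ j, A i j * v j = 0 := by
      have := congrFun hv i
      simpa [Matrix.mulVec, dotProduct] using this
    simp only [Matrix.mulVec, dotProduct, hP_def, Matrix.of_apply]
    have : ∀ j, (A i j + if i = j then s else 0) / s * v j
        = (A i j * v j + (if i = j then s * v j else 0)) / s := by
      intro j
      rcases eq_or_ne i j with rfl | hij
      · simp [div_mul_eq_mul_div, add_mul]
      · simp [hij, div_mul_eq_mul_div]
    rw [Finset.sum_congr rfl fun j _ => this j, ← Finset.sum_div,
      Finset.sum_add_distrib, hAv, zero_add, Finset.sum_ite_eq Finset.univ i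
        (fun j => s * v j)]
    simp [mul_div_assoc, mul_comm s (v i), mul_div_assoc, div_self hs.ne']
  -- the power exponent
  set mfun : Fin N → Fin N → ℕ :=
    fun i j => if h : i ≠ j then (hirr i j h).choose else 0 with hmfun_def
  set M : ℕ := Finset.univ.sup (fun p : Fin N × Fin N => mfun p.1 p.2) with hM_def
  set Q : Matrix (Fin N) (Fin N) ℝ := P ^ M with hQ_def
  have hQpos : ∀ i j, 0 < Q i j := by
    intro i j
    rcases eq_or_ne i j with rfl | hij
    · exact pow_entry_path_pos P hPnn M (fun _ => i) (fun l _ => hPdiag i)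
    · have hji : j ≠ i := hij.symm
      obtain ⟨c, h0, hm, hstep⟩ := (hirr j i hji).choose_spec
      set m := (hirr j i hji).choose with hm_def
      have hmM : m ≤ M := by
        have h1 : mfun j i = m := by rw [hmfun_def]; exact dif_pos hji
        have h2 : mfun j i ≤ M :=
          Finset.le_sup (f := fun p : Fin N × Fin N => mfun p.1 p.2)
            (Finset.mem_univ (j, i))
        omega
      have key := pow_entry_path_pos P hPnn M (fun l => c (min l m)) ?_
      · simpa [Nat.min_eq_right hmM, h0, hm] using key
      · intro l hl
        show 0 < P (c (min (l + 1) m)) (c (min l m))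
        rcases le_or_gt (l + 1) m with h1 | h1
        · have hlm : l < m := h1
          rw [Nat.min_eq_left h1, Nat.min_eq_left hlm.le]
          exact hPstep _ _ (hstep l hlm)
        · have h2 : m ≤ l := Nat.lt_succ_iff.mp h1
          rw [Nat.min_eq_right h2, Nat.min_eq_right (h2.trans l.le_succ)]
          exact hPdiag _
  have hQcol := pow_colsum P hPcol M
  have hQfix : ∀ v, A.mulVec v = 0 → Q.mulVec v = v :=
    fun v hv => pow_mulVec_fixed P v (hfix v hv) M
  -- existence of a nonzero kernel vector
  have hone : (fun _ : Fin N => (1 : ℝ)) ≠ 0 := by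
    intro h
    have := congrFun h ⟨0, hN⟩
    norm_num at this
  have htr : A.transpose.mulVec (fun _ => 1) = 0 := by
    funext i
    simpa [Matrix.mulVec, dotProduct, Matrix.transpose_apply] using hsum i
  have hdet : A.det = 0 := by
    rw [← Matrix.det_transpose]
    exact Matrix.exists_mulVec_eq_zero_iff.mp ⟨_, hone, htr⟩
  obtain ⟨u0, hu0ne, hu0⟩ := Matrix.exists_mulVec_eq_zero_iff.mpr hdet
  -- the main construction, given any positive kernel vector
  have main : ∀ w : Fin N → ℝ, (∀ i, 0 < w i) → A.mulVec w = 0 →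
      ∀ u : Fin N → ℝ, A.mulVec u = 0 → ∃ c : ℝ, u = c • w := by
    intro w hwpos hw u hu
    set i0 : Fin N := ⟨0, hN⟩
    refine ⟨u i0 / w i0, ?_⟩
    set v : Fin N → ℝ := u - (u i0 / w i0) • w with hv_def
    have hv : A.mulVec v = 0 := by
      rw [hv_def, Matrix.mulVec_sub, Matrix.mulVec_smul, hu, hw]
      simp
    have hv0 : v i0 = 0 := by
      have hw0 : w i0 ≠ 0 := (hwpos i0).ne'
      simp only [hv_def, Pi.sub_apply, Pi.smul_apply, smul_eq_mul]
      field_simp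
      ring
    have hvzero : v = 0 := by
      by_contra hne
      rcases sign_dichotomy hN Q hQpos hQcol v (hQfix v hv) with hp | hn
      · exact (all_pos Q hQpos v (hQfix v hv) hp hne i0).ne' hv0
      · have hnegfix : Q.mulVec (-v) = -v := by
          rw [Matrix.mulVec_neg, hQfix v hv]
        have := all_pos Q hQpos (-v) hnegfix (fun j => neg_nonneg.mpr (hn j))
          (neg_ne_zero.mpr hne) i0
        rw [Pi.neg_apply, hv0] at this
        exact absurd this (by simp [hv0])
    have := sub_eq_zero.mp hvzero
    exact this
  rcases sign_dichotomy hN Q hQpos hQcol u0 (hQfix u0 hu0) with hp | hn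
  · exact ⟨u0, all_pos Q hQpos u0 (hQfix u0 hu0) hp hu0ne, hu0,
      main u0 (all_pos Q hQpos u0 (hQfix u0 hu0) hp hu0ne) hu0⟩
  · have hnegker : A.mulVec (-u0) = 0 := by rw [Matrix.mulVec_neg, hu0]; simp
    have hnegfix : Q.mulVec (-u0) = -u0 := by rw [Matrix.mulVec_neg, hQfix u0 hu0]
    have hpos := all_pos Q hQpos (-u0) hnegfix (fun j => neg_nonneg.mpr (hn j))
      (neg_ne_zero.mpr hu0ne)
    exact ⟨-u0, hpos, hnegker, main (-u0) hpos hnegker⟩
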